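/- Let A = (a_ij) be an N×N real matrix with nonnegative entries and zero diagonal such that the directed graph G[A] is strongly connected, and let α_1,…,α_N ≥ 0 satisfy d_i^+[A] · α_i < 1/2 for every i. For each i let f_i : ℝ^{n_i} × ℝ^m → ℝ^{n_i} be continuous, h_i : ℝ^{n_i} → ℝ^m be continuously differentiable, and V_i : ℝ^{n_i} → [0,∞) be continuous and radially unbounded (V_i(x) → ∞ as |x| → ∞). Let x_i : [0,∞) → ℝ^{n_i} be continuously differentiable functions with y_i(t) = h_i(x_i(t)), u_i(t) = Σ_{j=1}^N a_ij (y_j(t) − y_i(t)), x_i'(t) = f_i(x_i(t), u_i(t)), and suppose V_i(x_i(T)) − V_i(x_i(0)) ≤ ∫_0^T (⟨y_i(t), u_i(t)⟩ + α_i |u_i(t)|²) dt for all T ≥ 0 and all i. Then each state trajectory x_i is bounded on [0,∞), and the outputs asymptotically synchronize: |y_j(t) − y_i(t)| → 0 as t → ∞ for all i, j. -/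

import Mathlib

open RealInnerProductSpace MeasureTheory

open Filter Metric intervalIntegral

set_option maxHeartbeats 1000000

lemma exists_balance {N : ℕ} (hN : 0 < N) (A : Fin N → Fin N → ℝ)
    (hA0 : ∀ i j, 0 ≤ A i j) (hdiag : ∀ i, A i i = 0)
    (hconn : ∀ i j : Fin N, i ≠ j → Relation.TransGen (fun a b => 0 < A a b) i j) :
    ∃ q : Fin N → ℝ, (∀ i, 0 < q i) ∧
      ∀ j, ∑ i, q i * A i j = q j * ∑ k, A j k := by
  haveI : NeZero N := ⟨hN.ne'⟩
  set c : ℝ := (∑ i, ∑ j, A i j) + 1 with hc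
  have hd_le : ∀ i, (∑ k, A i k) ≤ c - 1 := by
    intro i
    have : (∑ k, A i k) ≤ ∑ i, ∑ j, A i j :=
      Finset.single_le_sum (f := fun i => ∑ j, A i j)
        (fun i _ => Finset.sum_nonneg fun j _ => hA0 i j) (Finset.mem_univ i)
    simp [hc]; linarith
  have hd_nonneg : ∀ i, 0 ≤ ∑ k, A i k := fun i => Finset.sum_nonneg fun j _ => hA0 i j
  have hcpos : 0 < c := by
    have := hd_nonneg ⟨0, hN⟩
    have := hd_le ⟨0, hN⟩
    linarith
  set P : Fin N → Fin N → ℝ := fun i j => if i = j then 1 - (∑ k, A i k) / c else A i j / c with hP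
  have hP0 : ∀ i j, 0 ≤ P i j := by
    intro i j
    by_cases hij : i = j
    · simp only [hP, hij, if_pos rfl, sub_nonneg]
      rw [div_le_one hcpos]
      linarith [hd_le j]
    · simp only [hP, if_neg hij]
      exact div_nonneg (hA0 i j) hcpos.le
  have hProw : ∀ i, ∑ j, P i j = 1 := by
    intro i
    rw [← Finset.add_sum_erase _ _ (Finset.mem_univ i)]
    have h1 : ∑ j ∈ Finset.univ.erase i, P i j = ∑ j ∈ Finset.univ.erase i, A i j / c := by
      apply Finset.sum_congr rfl
      intro j hj
      have : i ≠ j := (Finset.ne_of_mem_erase hj).symm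
      simp [hP, this]
    rw [h1]
    have h2 : ∑ j ∈ Finset.univ.erase i, A i j / c = (∑ k, A i k) / c := by
      rw [← Finset.sum_div]
      congr 1
      rw [← Finset.add_sum_erase _ _ (Finset.mem_univ i), hdiag i, zero_add]
    rw [h2]
    simp [hP]
  set T : (Fin N → ℝ) → (Fin N → ℝ) := fun q j => ∑ i, q i * P i j with hT
  set e : Fin N → ℝ := fun i => if i = ⟨0, hN⟩ then 1 else 0 with he
  have heS : e ∈ stdSimplex ℝ (Fin N) := by
    constructor
    · intro i; simp only [he]; split_ifs <;> norm_num
    · simp only [he]; rw [Finset.sum_ite_eq']; simp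
  have hTS : ∀ q ∈ stdSimplex ℝ (Fin N), T q ∈ stdSimplex ℝ (Fin N) := by
    intro q hq
    constructor
    · intro j
      exact Finset.sum_nonneg fun i _ => mul_nonneg (hq.1 i) (hP0 i j)
    · rw [show ∑ j, T q j = ∑ i, q i * ∑ j, P i j by
        rw [Finset.sum_comm]; simp [hT, Finset.mul_sum]]
      simp only [hProw, mul_one]
      exact hq.2
  set v : ℕ → (Fin N → ℝ) := fun k => T^[k] e with hv
  have hvS : ∀ k, v k ∈ stdSimplex ℝ (Fin N) := by
    intro k
    induction k with
    | zero => simpa [hv] using heS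
    | succ k ih =>
      show T^[k+1] e ∈ _
      rw [Function.iterate_succ_apply']
      exact hTS _ ih
  have hv01 : ∀ k j, 0 ≤ v k j ∧ v k j ≤ 1 := by
    intro k j
    refine ⟨(hvS k).1 j, ?_⟩
    calc v k j ≤ ∑ i, v k i :=
          Finset.single_le_sum (fun i _ => (hvS k).1 i) (Finset.mem_univ j)
      _ = 1 := (hvS k).2
  set s : ℕ → (Fin N → ℝ) := fun n j => (∑ k ∈ Finset.range (n+1), v k j) / (n+1) with hs
  have hsS : ∀ n, s n ∈ stdSimplex ℝ (Fin N) := by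
    intro n
    constructor
    · intro j
      apply div_nonneg (Finset.sum_nonneg fun k _ => (hvS k).1 j) (by positivity)
    · have : ∑ j, s n j = (∑ j, ∑ k ∈ Finset.range (n+1), v k j) / (n+1) := by
        rw [Finset.sum_div]
      rw [this, Finset.sum_comm]
      have : ∀ k ∈ Finset.range (n+1), ∑ j, v k j = 1 := fun k _ => (hvS k).2
      rw [Finset.sum_congr rfl this]
      simp only [Finset.sum_const, Finset.card_range, nsmul_eq_mul, mul_one]
      push_cast
      rw [div_self (by positivity)]
  obtain ⟨q, hqS, φ, hφ, hlim⟩ := (isCompact_stdSimplex ℝ (Fin N)).tendsto_subseq hsS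
  have hTcont : Continuous T := by
    apply continuous_pi
    intro j
    exact continuous_finset_sum _ fun i _ => ((continuous_apply i).mul continuous_const)
  have hTs : ∀ n j, T (s n) j - s n j = (v (n+1) j - v 0 j) / (n+1) := by
    intro n j
    have hlin : T (s n) j = (∑ k ∈ Finset.range (n+1), T (v k) j) / (n+1) := by
      show ∑ i, s n i * P i j = _
      simp only [hs, hT]
      simp only [div_mul_eq_mul_div, Finset.sum_mul, Finset.sum_div]
      rw [Finset.sum_comm]
    have hTv : ∀ k, T (v k) = v (k+1) := by
      intro k; show T (T^[k] e) = T^[k+1] e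
      rw [Function.iterate_succ_apply']
    rw [hlin]
    simp only [hTv]
    have hkey : ∑ k ∈ Finset.range (n+1), v (k+1) j
        = ∑ k ∈ Finset.range (n+1), v k j + v (n+1) j - v 0 j := by
      have e1 := Finset.sum_range_succ (fun k => v (k+1) j) n
      have e2 := Finset.sum_range_succ' (fun k => v k j) n
      linarith
    rw [hkey, hs]
    have : ((n:ℝ)+1) ≠ 0 := by positivity
    field_simp
    ring
  have hfix : T q = q := by
    funext j
    have h1 : Tendsto (fun n => T (s (φ n)) j) atTop (nhds (T q j)) :=
      ((continuous_apply j).tendsto _).comp ((hTcont.tendsto q).comp hlim)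
    have h2 : Tendsto (fun n => s (φ n) j) atTop (nhds (q j)) :=
      ((continuous_apply j).tendsto _).comp hlim
    have h3 : Tendsto (fun n => T (s (φ n)) j - s (φ n) j) atTop (nhds (T q j - q j)) :=
      h1.sub h2
    have h4 : Tendsto (fun n => T (s (φ n)) j - s (φ n) j) atTop (nhds 0) := by
      refine squeeze_zero_norm (f := fun n => T (s (φ n)) j - s (φ n) j)
        (a := fun n => 2 / ((n:ℝ)+1)) ?_ ?_
      · intro n
        show |T (s (φ n)) j - s (φ n) j| ≤ 2 / ((n:ℝ)+1)
        rw [hTs, abs_div, abs_of_pos (by positivity : (0:ℝ) < (φ n : ℝ)+1)]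
        have hnum : |v (φ n + 1) j - v 0 j| ≤ 2 := by
          have a1 := hv01 (φ n + 1) j
          have a2 := hv01 0 j
          rw [abs_le]; constructor <;> linarith
        have hden : ((n:ℝ)+1) ≤ ((φ n : ℝ)+1) := by
          have h6 : n ≤ φ n := hφ.le_apply
          have h7 : ((n:ℝ)) ≤ ((φ n : ℝ)) := by exact_mod_cast h6
          linarith
        calc |v (φ n + 1) j - v 0 j| / ((φ n : ℝ)+1)
            ≤ 2 / ((φ n : ℝ)+1) := by
              apply div_le_div_of_nonneg_right hnum (by positivity) |>.trans_eq rfl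
          _ ≤ 2 / ((n:ℝ)+1) := by
              apply div_le_div_of_nonneg_left (by norm_num) (by positivity) hden
      · have h5 : Tendsto (fun n : ℕ => ((n:ℝ)+1)) atTop atTop :=
          tendsto_atTop_add_const_right _ 1 tendsto_natCast_atTop_atTop
        exact Tendsto.div_atTop tendsto_const_nhds h5
    have := tendsto_nhds_unique h3 h4
    linarith [this]
  refine ⟨q, ?_, ?_⟩
  · -- positivity
    have hq0 : ∀ i, 0 ≤ q i := hqS.1
    have hqfix : ∀ j, q j = ∑ i, q i * P i j := fun j => (congrFun hfix j).symm
    have hstep : ∀ a b, 0 < A a b → 0 < q a → 0 < q b := by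
      intro a b hab hqa
      have hane : a ≠ b := by
        rintro rfl; rw [hdiag a] at hab; exact lt_irrefl 0 hab
      have hPab : 0 < P a b := by
        simp only [hP, if_neg hane]
        exact div_pos hab hcpos
      have : q a * P a b ≤ ∑ i, q i * P i b :=
        Finset.single_le_sum (fun i _ => mul_nonneg (hq0 i) (hP0 i b)) (Finset.mem_univ a)
      rw [← hqfix b] at this
      exact lt_of_lt_of_le (mul_pos hqa hPab) this
    have hex : ∃ i0, 0 < q i0 := by
      by_contra hno
      push_neg at hno
      have : ∑ i, q i = 0 :=
        Finset.sum_eq_zero fun i _ => le_antisymm (hno i) (hq0 i)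
      rw [hqS.2] at this; norm_num at this
    obtain ⟨i0, hi0⟩ := hex
    have hall : ∀ b, Relation.TransGen (fun a b => 0 < A a b) i0 b → 0 < q b := by
      intro b htg
      induction htg with
      | single h => exact hstep _ _ h hi0
      | tail _ h ih => exact hstep _ _ h ih
    intro i
    rcases eq_or_ne i0 i with rfl | hne
    · exact hi0
    · exact hall i (hconn i0 i hne)
  · -- balance
    intro j
    have hqfix : ∑ i, q i * P i j = q j := congrFun hfix j
    have hsplit : ∑ i, q i * P i j
        = q j * (1 - (∑ k, A j k)/c) + ∑ i ∈ Finset.univ.erase j, q i * (A i j / c) := by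
      rw [← Finset.add_sum_erase _ _ (Finset.mem_univ j)]
      congr 1
      · simp [hP]
      · apply Finset.sum_congr rfl
        intro i hi
        have : i ≠ j := Finset.ne_of_mem_erase hi
        simp [hP, this]
    have hsum2 : ∑ i ∈ Finset.univ.erase j, q i * (A i j / c) = (∑ i, q i * A i j) / c := by
      rw [Finset.sum_div, ← Finset.add_sum_erase Finset.univ (fun i => q i * A i j / c) (Finset.mem_univ j)]
      simp only [hdiag j, mul_zero, zero_div, zero_add]
      apply Finset.sum_congr rfl
      intro i _; ring
    rw [hsplit, hsum2] at hqfix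
    have hcne : c ≠ 0 := hcpos.ne'
    field_simp at hqfix
    linarith


lemma barbalat (W : ℝ → ℝ) (C K : ℝ) (hK : 0 < K)
    (hcont : ContinuousOn W (Set.Ici 0))
    (hpos : ∀ t, 0 ≤ W t)
    (hlip : ∀ s t : ℝ, 0 ≤ s → 0 ≤ t → |W t - W s| ≤ K * |t - s|)
    (hint : ∀ T, 0 ≤ T → ∫ t in (0:ℝ)..T, W t ≤ C) :
    Filter.Tendsto W Filter.atTop (nhds 0) := by
  have hInteg : ∀ a b : ℝ, 0 ≤ a → a ≤ b → IntervalIntegrable W volume a b := by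
    intro a b ha hab
    apply ContinuousOn.intervalIntegrable
    apply hcont.mono
    rw [Set.uIcc_of_le hab]
    exact fun z hz => le_trans ha hz.1
  rw [Metric.tendsto_atTop]
  by_contra hcon
  push_neg at hcon
  obtain ⟨ε, hε, hfreq⟩ := hcon
  set δ : ℝ := ε / (2 * K) with hδ
  have hδpos : 0 < δ := by positivity
  -- key: each bump contributes δ * (ε/2)
  have key : ∀ k : ℕ, ∃ T, 0 ≤ T ∧ (k : ℝ) * (δ * (ε / 2)) ≤ ∫ t in (0:ℝ)..T, W t := by
    intro k
    induction k with
    | zero => exact ⟨0, le_refl 0, by simp⟩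
    | succ k ih =>
      obtain ⟨Tk, hTk0, hTk⟩ := ih
      obtain ⟨t, ht, hWt⟩ := hfreq (max Tk 0 + 1)
      have ht0 : 0 ≤ t := by have := le_max_right Tk (0:ℝ); linarith
      have htTk : Tk ≤ t := le_trans (le_max_left _ _) (by linarith)
      have hWtε : ε ≤ W t := by
        have : dist (W t) 0 = W t := by
          rw [Real.dist_eq, sub_zero, abs_of_nonneg (hpos t)]
        linarith [hWt, this.symm.le]
      -- on [t, t+δ], W ≥ ε/2
      have hlow : ∀ s ∈ Set.Icc t (t + δ), ε / 2 ≤ W s := by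
        intro s hs
        have hs0 : 0 ≤ s := le_trans ht0 hs.1
        have h1 : |W s - W t| ≤ K * |s - t| := hlip t s ht0 hs0
        have h2 : |s - t| ≤ δ := by
          rw [abs_of_nonneg (by linarith [hs.1])]
          linarith [hs.2]
        have h3 : K * |s - t| ≤ K * δ := by nlinarith
        have h4 : K * δ = ε / 2 := by
          rw [hδ]; field_simp
        have := abs_le.mp (h1.trans (h3.trans_eq h4))
        linarith
      have hbump : δ * (ε / 2) ≤ ∫ s in t..(t+δ), W s := by
        have hconst : ∫ s in t..(t+δ), (ε/2 : ℝ) = δ * (ε/2) := by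
          rw [intervalIntegral.integral_const]; simp [smul_eq_mul]
        rw [← hconst]
        apply integral_mono_on (by linarith)
          (intervalIntegrable_const) (hInteg t (t+δ) ht0 (by linarith))
        intro s hs; exact hlow s hs
      refine ⟨t + δ, by linarith, ?_⟩
      have hsplit1 : ∫ s in (0:ℝ)..(t+δ), W s
          = (∫ s in (0:ℝ)..Tk, W s) + ∫ s in Tk..(t+δ), W s := by
        rw [integral_add_adjacent_intervals (hInteg 0 Tk le_rfl hTk0)
          (hInteg Tk (t+δ) hTk0 (by linarith))]
      have hsplit2 : ∫ s in Tk..(t+δ), W s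
          = (∫ s in Tk..t, W s) + ∫ s in t..(t+δ), W s := by
        rw [integral_add_adjacent_intervals (hInteg Tk t hTk0 htTk)
          (hInteg t (t+δ) ht0 (by linarith))]
      have hnn : 0 ≤ ∫ s in Tk..t, W s :=
        integral_nonneg htTk (fun s _ => hpos s)
      rw [hsplit1, hsplit2]
      push_cast
      nlinarith
  obtain ⟨k, hk⟩ := exists_nat_gt (C / (δ * (ε / 2)))
  obtain ⟨T, hT0, hT⟩ := key k
  have h1 : C < (k:ℝ) * (δ * (ε/2)) := by
    rw [div_lt_iff₀ (by positivity)] at hk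
    linarith
  linarith [hint T hT0]


lemma pointwise_ineq {N : ℕ} {E : Type*} [NormedAddCommGroup E] [InnerProductSpace ℝ E]
    (A : Fin N → Fin N → ℝ) (hA0 : ∀ i j, 0 ≤ A i j)
    (q : Fin N → ℝ) (hq : ∀ i, 0 ≤ q i)
    (hbal : ∀ j, ∑ i, q i * A i j = q j * ∑ k, A j k)
    (α : Fin N → ℝ) (hα : ∀ i, 0 ≤ α i) (β : ℝ)
    (hβ : ∀ i, (∑ k, A i k) * α i ≤ β)
    (Y : Fin N → E) :
    ∑ i, q i * (⟪Y i, ∑ j, A i j • (Y j - Y i)⟫ + α i * ‖∑ j, A i j • (Y j - Y i)‖^2)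
      ≤ -(1/2 - β) * ∑ i, ∑ j, q i * A i j * ‖Y j - Y i‖^2 := by
  classical
  set W : ℝ := ∑ i, ∑ j, q i * A i j * ‖Y j - Y i‖^2 with hW
  set S1 : ℝ := ∑ i, ∑ j, q i * A i j * ‖Y j‖^2 with hS1
  set S2 : ℝ := ∑ i, ∑ j, q i * A i j * ‖Y i‖^2 with hS2
  have hS12 : S1 = S2 := by
    rw [hS1, hS2, Finset.sum_comm]
    apply Finset.sum_congr rfl
    intro j _
    have l1 : ∑ i, q i * A i j * ‖Y j‖^2 = (∑ i, q i * A i j) * ‖Y j‖^2 := by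
      rw [Finset.sum_mul]
    have l2 : ∑ k, q j * A j k * ‖Y j‖^2 = (q j * ∑ k, A j k) * ‖Y j‖^2 := by
      simp only [Finset.mul_sum, Finset.sum_mul, mul_assoc]
    rw [l1, l2, hbal j]
  have hinner : ∀ i, ⟪Y i, ∑ j, A i j • (Y j - Y i)⟫
      = ∑ j, A i j * ((‖Y j‖^2 - ‖Y i‖^2 - ‖Y j - Y i‖^2)/2) := by
    intro i
    rw [inner_sum]
    apply Finset.sum_congr rfl
    intro j _
    rw [real_inner_smul_right]
    have h1 := norm_sub_sq_real (Y j) (Y i)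
    have h2 : ⟪Y i, Y j - Y i⟫ = ⟪Y i, Y j⟫ - ‖Y i‖^2 := by
      rw [inner_sub_right, real_inner_self_eq_norm_sq]
    have h3 : ⟪Y j, Y i⟫ = ⟪Y i, Y j⟫ := real_inner_comm _ _
    rw [h2]
    rw [h3] at h1
    have : ⟪Y i, Y j⟫ - ‖Y i‖^2 = (‖Y j‖^2 - ‖Y i‖^2 - ‖Y j - Y i‖^2)/2 := by linarith
    rw [this]
  have hsum1 : ∑ i, q i * ⟪Y i, ∑ j, A i j • (Y j - Y i)⟫ = (S1 - S2 - W)/2 := by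
    rw [Finset.sum_congr rfl (fun i _ => by rw [hinner i])]
    rw [hS1, hS2, hW]
    rw [← Finset.sum_sub_distrib, ← Finset.sum_sub_distrib, Finset.sum_div]
    apply Finset.sum_congr rfl
    intro i _
    rw [Finset.mul_sum, ← Finset.sum_sub_distrib, ← Finset.sum_sub_distrib, Finset.sum_div]
    apply Finset.sum_congr rfl
    intro j _
    ring
  have hCS : ∀ i, ‖∑ j, A i j • (Y j - Y i)‖^2
      ≤ (∑ k, A i k) * ∑ j, A i j * ‖Y j - Y i‖^2 := by
    intro i
    have h1 : ‖∑ j, A i j • (Y j - Y i)‖ ≤ ∑ j, A i j * ‖Y j - Y i‖ := by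
      refine (norm_sum_le _ _).trans ?_
      apply Finset.sum_le_sum
      intro j _
      rw [norm_smul, Real.norm_eq_abs, abs_of_nonneg (hA0 i j)]
    have h2 : (∑ j, A i j * ‖Y j - Y i‖)^2
        ≤ (∑ k, A i k) * ∑ j, A i j * ‖Y j - Y i‖^2 := by
      have hcs := Finset.sum_mul_sq_le_sq_mul_sq Finset.univ
        (fun j => Real.sqrt (A i j)) (fun j => Real.sqrt (A i j) * ‖Y j - Y i‖)
      have e1 : ∀ j : Fin N, Real.sqrt (A i j) * (Real.sqrt (A i j) * ‖Y j - Y i‖)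
          = A i j * ‖Y j - Y i‖ := fun j => by
        rw [← mul_assoc, Real.mul_self_sqrt (hA0 i j)]
      have e2 : ∀ j : Fin N, (Real.sqrt (A i j))^2 = A i j := fun j => Real.sq_sqrt (hA0 i j)
      have e3 : ∀ j : Fin N, (Real.sqrt (A i j) * ‖Y j - Y i‖)^2
          = A i j * ‖Y j - Y i‖^2 := fun j => by rw [mul_pow, e2]
      simp only [e1, e2, e3] at hcs
      exact hcs
    calc ‖∑ j, A i j • (Y j - Y i)‖^2
        ≤ (∑ j, A i j * ‖Y j - Y i‖)^2 := by
          apply pow_le_pow_left₀ (norm_nonneg _) h1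
      _ ≤ _ := h2
  have hsum2 : ∑ i, q i * (α i * ‖∑ j, A i j • (Y j - Y i)‖^2) ≤ β * W := by
    have hWi : ∀ i, 0 ≤ ∑ j, A i j * ‖Y j - Y i‖^2 := fun i =>
      Finset.sum_nonneg fun j _ => mul_nonneg (hA0 i j) (sq_nonneg _)
    have step : ∀ i, q i * (α i * ‖∑ j, A i j • (Y j - Y i)‖^2)
        ≤ q i * (β * ∑ j, A i j * ‖Y j - Y i‖^2) := by
      intro i
      apply mul_le_mul_of_nonneg_left _ (hq i)
      calc α i * ‖∑ j, A i j • (Y j - Y i)‖^2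
          ≤ α i * ((∑ k, A i k) * ∑ j, A i j * ‖Y j - Y i‖^2) :=
            mul_le_mul_of_nonneg_left (hCS i) (hα i)
        _ = ((∑ k, A i k) * α i) * (∑ j, A i j * ‖Y j - Y i‖^2) := by ring
        _ ≤ β * ∑ j, A i j * ‖Y j - Y i‖^2 :=
            mul_le_mul_of_nonneg_right (hβ i) (hWi i)
    calc ∑ i, q i * (α i * ‖∑ j, A i j • (Y j - Y i)‖^2)
        ≤ ∑ i, q i * (β * ∑ j, A i j * ‖Y j - Y i‖^2) := Finset.sum_le_sum fun i _ => step i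
      _ = β * W := by
          rw [hW, Finset.mul_sum]
          apply Finset.sum_congr rfl
          intro i _
          rw [Finset.mul_sum, Finset.mul_sum, Finset.mul_sum]
          apply Finset.sum_congr rfl
          intro j _
          ring
  have hsplit : ∑ i, q i * (⟪Y i, ∑ j, A i j • (Y j - Y i)⟫ + α i * ‖∑ j, A i j • (Y j - Y i)‖^2)
      = (∑ i, q i * ⟪Y i, ∑ j, A i j • (Y j - Y i)⟫)
        + ∑ i, q i * (α i * ‖∑ j, A i j • (Y j - Y i)‖^2) := by
    rw [← Finset.sum_add_distrib]
    apply Finset.sum_congr rfl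
    intro i _
    ring
  rw [hsplit, hsum1]
  have : (S1 - S2 - W)/2 = -(1/2) * W := by rw [hS12]; ring
  rw [this]
  linarith [hsum2]


/-- Theorem 1, statement (2): for IFP(α_i) agents `ẋ_i = f_i(x_i,u_i)`,
`y_i = h_i(x_i)` with radially unbounded storage functions, diffusively coupled
over a strongly connected graph with `d_i⁺[A]·α_i < 1/2`, every state trajectory
is bounded on `[0,∞)` and the outputs asymptotically synchronize. -/
theorem output_synchronization_bounded_states
    (N m : ℕ) (n : Fin N → ℕ) (A : Fin N → Fin N → ℝ)
    (hA_nonneg : ∀ i j, 0 ≤ A i j)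
    (hA_diag : ∀ i, A i i = 0)
    (hconn : ∀ i j : Fin N, i ≠ j → Relation.TransGen (fun a b => 0 < A a b) i j)
    (α : Fin N → ℝ)
    (hα_nonneg : ∀ i, 0 ≤ α i)
    (hα_deg : ∀ i, (∑ j, A i j) * α i < 1 / 2)
    (f : ∀ i : Fin N,
      EuclideanSpace ℝ (Fin (n i)) × EuclideanSpace ℝ (Fin m) →
        EuclideanSpace ℝ (Fin (n i)))
    (hf_cont : ∀ i, Continuous (f i))
    (h : ∀ i : Fin N, EuclideanSpace ℝ (Fin (n i)) → EuclideanSpace ℝ (Fin m))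
    (hh_smooth : ∀ i, ContDiff ℝ 1 (h i))
    (V : ∀ i : Fin N, EuclideanSpace ℝ (Fin (n i)) → ℝ)
    (hV_cont : ∀ i, Continuous (V i))
    (hV_nonneg : ∀ i x, 0 ≤ V i x)
    (hV_radial : ∀ i, ∀ c : ℝ, ∃ r : ℝ, ∀ x, r ≤ ‖x‖ → c ≤ V i x)
    (x : ∀ i : Fin N, ℝ → EuclideanSpace ℝ (Fin (n i)))
    (y u : Fin N → ℝ → EuclideanSpace ℝ (Fin m))
    (hy : ∀ i t, y i t = h i (x i t))
    (hu : ∀ i t, u i t = ∑ j, A i j • (y j t - y i t))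
    (hode : ∀ i t, 0 ≤ t → HasDerivAt (x i) (f i (x i t, u i t)) t)
    (hdiss : ∀ i, ∀ T, 0 ≤ T →
      V i (x i T) - V i (x i 0) ≤
        ∫ t in (0 : ℝ)..T, (⟪y i t, u i t⟫ + α i * ‖u i t‖ ^ 2)) :
    (∀ i, ∃ C : ℝ, ∀ t, 0 ≤ t → ‖x i t‖ ≤ C) ∧
    (∀ i j, Filter.Tendsto (fun t => ‖y j t - y i t‖) Filter.atTop (nhds 0)) := by
  rcases Nat.eq_zero_or_pos N with hN0 | hN
  · subst hN0
    exact ⟨fun i => i.elim0, fun i j => i.elim0⟩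
  haveI : Nonempty (Fin N) := ⟨⟨0, hN⟩⟩
  obtain ⟨q, hqpos, hbal⟩ := exists_balance hN A hA_nonneg hA_diag hconn
  -- continuity of trajectories on [0,∞)
  have hxcont : ∀ i, ContinuousOn (x i) (Set.Ici 0) :=
    fun i t ht => ((hode i t ht).continuousAt).continuousWithinAt
  have hycont : ∀ i, ContinuousOn (y i) (Set.Ici 0) := by
    intro i
    have hyi : y i = fun t => h i (x i t) := funext (hy i)
    rw [hyi]
    exact (hh_smooth i).continuous.comp_continuousOn (hxcont i)
  have hucont : ∀ i, ContinuousOn (u i) (Set.Ici 0) := by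
    intro i
    have hui : u i = fun t => ∑ j, A i j • (y j t - y i t) := funext (hu i)
    rw [hui]
    exact continuousOn_finset_sum _ fun j _ =>
      (((hycont j).sub (hycont i)).const_smul (A i j))
  set I : Fin N → ℝ → ℝ := fun i t => ⟪y i t, u i t⟫ + α i * ‖u i t‖ ^ 2 with hI
  have hIcont : ∀ i, ContinuousOn (I i) (Set.Ici 0) := by
    intro i
    exact (ContinuousOn.inner (hycont i) (hucont i)).add
      (continuousOn_const.mul (((hucont i).norm).pow 2))
  set W : ℝ → ℝ := fun t => ∑ i, ∑ j, q i * A i j * ‖y j t - y i t‖ ^ 2 with hW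
  have hWcont : ContinuousOn W (Set.Ici 0) := by
    apply continuousOn_finset_sum
    intro i _
    apply continuousOn_finset_sum
    intro j _
    exact continuousOn_const.mul ((((hycont j).sub (hycont i)).norm).pow 2)
  have hWnonneg : ∀ t, 0 ≤ W t := by
    intro t
    apply Finset.sum_nonneg; intro i _
    apply Finset.sum_nonneg; intro j _
    exact mul_nonneg (mul_nonneg (hqpos i).le (hA_nonneg i j)) (sq_nonneg _)
  -- beta and epsilon
  set β : ℝ := Finset.univ.sup' Finset.univ_nonempty (fun i => (∑ j, A i j) * α i) with hβ
  have hβlt : β < 1/2 := by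
    rw [hβ, Finset.sup'_lt_iff]
    exact fun i _ => hα_deg i
  have hβi : ∀ i, (∑ k, A i k) * α i ≤ β := by
    intro i
    rw [hβ]
    exact Finset.le_sup' (fun k => (∑ j, A k j) * α k) (Finset.mem_univ i)
  set ε : ℝ := 1/2 - β with hε
  have hεpos : 0 < ε := by rw [hε]; linarith
  -- pointwise inequality
  have hpt : ∀ t, ∑ i, q i * I i t ≤ -ε * W t := by
    intro t
    have hp := pointwise_ineq A hA_nonneg q (fun i => (hqpos i).le) hbal α hα_nonneg β hβi
      (fun j => y j t)
    have hrw : ∀ i, u i t = ∑ j, A i j • (y j t - y i t) := fun i => hu i t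
    rw [hI]
    simp only [hrw]
    rw [hW, hε]
    exact hp
  -- integrability
  have hIint : ∀ i, ∀ T, 0 ≤ T → IntervalIntegrable (I i) volume 0 T := by
    intro i T hT
    apply ContinuousOn.intervalIntegrable
    apply (hIcont i).mono
    rw [Set.uIcc_of_le hT]
    exact fun z hz => hz.1
  have hScont : ContinuousOn (fun t => ∑ i, q i * I i t) (Set.Ici 0) :=
    continuousOn_finset_sum _ fun i _ => continuousOn_const.mul (hIcont i)
  have hSint : ∀ T, 0 ≤ T → IntervalIntegrable (fun t => ∑ i, q i * I i t) volume 0 T := by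
    intro T hT
    apply ContinuousOn.intervalIntegrable
    apply hScont.mono
    rw [Set.uIcc_of_le hT]
    exact fun z hz => hz.1
  have hWint : ∀ T, 0 ≤ T → IntervalIntegrable W volume 0 T := by
    intro T hT
    apply ContinuousOn.intervalIntegrable
    apply hWcont.mono
    rw [Set.uIcc_of_le hT]
    exact fun z hz => hz.1
  -- key integral inequality
  set C0 : ℝ := ∑ k, q k * V k (x k 0) with hC0
  have hC0nn : 0 ≤ C0 :=
    Finset.sum_nonneg fun k _ => mul_nonneg (hqpos k).le (hV_nonneg k _)
  have hkey : ∀ T, 0 ≤ T →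
      (∑ i, q i * (V i (x i T) - V i (x i 0))) ≤ -ε * ∫ t in (0:ℝ)..T, W t := by
    intro T hT
    have step1 : (∑ i, q i * (V i (x i T) - V i (x i 0)))
        ≤ ∑ i, q i * ∫ t in (0:ℝ)..T, I i t :=
      Finset.sum_le_sum fun i _ =>
        mul_le_mul_of_nonneg_left (hdiss i T hT) (hqpos i).le
    have step2 : ∑ i, q i * ∫ t in (0:ℝ)..T, I i t
        = ∫ t in (0:ℝ)..T, ∑ i, q i * I i t := by
      rw [intervalIntegral.integral_finset_sum
        (fun i _ => (hIint i T hT).const_mul (q i))]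
      apply Finset.sum_congr rfl
      intro i _
      rw [intervalIntegral.integral_const_mul]
    have step3 : ∫ t in (0:ℝ)..T, ∑ i, q i * I i t
        ≤ ∫ t in (0:ℝ)..T, (-ε * W t) := by
      apply intervalIntegral.integral_mono_on hT
      · exact hSint T hT
      · exact (hWint T hT).const_mul (-ε)
      · exact fun t _ => hpt t
    have step4 : ∫ t in (0:ℝ)..T, (-ε * W t) = -ε * ∫ t in (0:ℝ)..T, W t :=
      intervalIntegral.integral_const_mul _ _
    calc ∑ i, q i * (V i (x i T) - V i (x i 0))
        ≤ ∑ i, q i * ∫ t in (0:ℝ)..T, I i t := step1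
      _ = ∫ t in (0:ℝ)..T, ∑ i, q i * I i t := step2
      _ ≤ ∫ t in (0:ℝ)..T, (-ε * W t) := step3
      _ = -ε * ∫ t in (0:ℝ)..T, W t := step4
  -- bounded storage
  have hsumV : ∀ T, 0 ≤ T → ∑ k, q k * V k (x k T) ≤ C0 := by
    intro T hT
    have h1 := hkey T hT
    have h2 : 0 ≤ ∫ t in (0:ℝ)..T, W t :=
      intervalIntegral.integral_nonneg hT (fun t _ => hWnonneg t)
    have h3 : -ε * ∫ t in (0:ℝ)..T, W t ≤ 0 := by nlinarith
    have h4 : ∑ i, q i * (V i (x i T) - V i (x i 0))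
        = (∑ k, q k * V k (x k T)) - C0 := by
      rw [hC0, ← Finset.sum_sub_distrib]
      apply Finset.sum_congr rfl
      intro i _
      ring
    rw [h4] at h1
    linarith
  have hintW : ∀ T, 0 ≤ T → ∫ t in (0:ℝ)..T, W t ≤ C0 / ε := by
    intro T hT
    have h1 := hkey T hT
    have h2 : -C0 ≤ ∑ i, q i * (V i (x i T) - V i (x i 0)) := by
      have h4 : ∑ i, q i * (V i (x i T) - V i (x i 0))
          = (∑ k, q k * V k (x k T)) - C0 := by
        rw [hC0, ← Finset.sum_sub_distrib]
        apply Finset.sum_congr rfl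
        intro i _
        ring
      have h5 : 0 ≤ ∑ k, q k * V k (x k T) :=
        Finset.sum_nonneg fun k _ => mul_nonneg (hqpos k).le (hV_nonneg k _)
      linarith
    rw [le_div_iff₀ hεpos]
    nlinarith
  -- state bounds
  have hxbdd : ∀ i, ∃ C, 0 ≤ C ∧ ∀ t, 0 ≤ t → ‖x i t‖ ≤ C := by
    intro i
    obtain ⟨r, hr⟩ := hV_radial i (C0 / q i + 1)
    refine ⟨max r 0, le_max_right _ _, ?_⟩
    intro t ht
    have hVle : V i (x i t) ≤ C0 / q i := by
      rw [le_div_iff₀ (hqpos i)]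
      have : q i * V i (x i t) ≤ ∑ k, q k * V k (x k t) :=
        Finset.single_le_sum (f := fun k => q k * V k (x k t))
          (fun k _ => mul_nonneg (hqpos k).le (hV_nonneg k _)) (Finset.mem_univ i)
      calc V i (x i t) * q i = q i * V i (x i t) := by ring
        _ ≤ ∑ k, q k * V k (x k t) := this
        _ ≤ C0 := hsumV t ht
    by_contra hc
    push_neg at hc
    have : r ≤ ‖x i t‖ := le_trans (le_max_left r 0) hc.le
    have := hr _ this
    linarith
  choose R hR0 hR using hxbdd
  refine ⟨fun i => ⟨R i, hR i⟩, ?_⟩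
  -- output bounds
  have hybdd : ∀ i, ∃ Yb, ∀ t, 0 ≤ t → ‖y i t‖ ≤ Yb := by
    intro i
    obtain ⟨Yb, hYb⟩ := (isCompact_closedBall (0 : EuclideanSpace ℝ (Fin (n i))) (R i)
      ).exists_bound_of_continuousOn (hh_smooth i).continuous.continuousOn
    refine ⟨Yb, fun t ht => ?_⟩
    rw [hy i t]
    exact hYb _ (mem_closedBall_zero_iff.mpr (hR i t ht))
  choose Yb hYb using hybdd
  set Ym : ℝ := ∑ i, max (Yb i) 0 with hYm
  have hYmnn : 0 ≤ Ym := Finset.sum_nonneg fun i _ => le_max_right _ _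
  have hYmb : ∀ i t, 0 ≤ t → ‖y i t‖ ≤ Ym := by
    intro i t ht
    calc ‖y i t‖ ≤ Yb i := hYb i t ht
      _ ≤ max (Yb i) 0 := le_max_left _ _
      _ ≤ Ym := Finset.single_le_sum (fun k (_ : k ∈ Finset.univ) => le_max_right (Yb k) 0)
          (Finset.mem_univ i)
  -- input bound
  set U : ℝ := (∑ i, ∑ j, A i j) * (2 * Ym) with hU
  have hUb : ∀ i t, 0 ≤ t → ‖u i t‖ ≤ U := by
    intro i t ht
    rw [hu i t]
    calc ‖∑ j, A i j • (y j t - y i t)‖ ≤ ∑ j, ‖A i j • (y j t - y i t)‖ := norm_sum_le _ _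
      _ ≤ ∑ j, A i j * (2 * Ym) := by
          apply Finset.sum_le_sum
          intro j _
          rw [norm_smul, Real.norm_eq_abs, abs_of_nonneg (hA_nonneg i j)]
          apply mul_le_mul_of_nonneg_left _ (hA_nonneg i j)
          calc ‖y j t - y i t‖ ≤ ‖y j t‖ + ‖y i t‖ := norm_sub_le _ _
            _ ≤ 2 * Ym := by linarith [hYmb j t ht, hYmb i t ht]
      _ = (∑ j, A i j) * (2 * Ym) := by rw [Finset.sum_mul]
      _ ≤ U := by
          rw [hU]
          apply mul_le_mul_of_nonneg_right _ (by linarith)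
          exact Finset.single_le_sum
            (fun k (_ : k ∈ Finset.univ) => Finset.sum_nonneg fun l _ => hA_nonneg k l)
            (Finset.mem_univ i)
  -- x Lipschitz
  have hxlip : ∀ i, ∃ L, 0 ≤ L ∧ ∀ s t : ℝ, 0 ≤ s → 0 ≤ t →
      ‖x i t - x i s‖ ≤ L * |t - s| := by
    intro i
    obtain ⟨Fb, hFb⟩ := ((isCompact_closedBall (0 : EuclideanSpace ℝ (Fin (n i))) (R i)).prod
      (isCompact_closedBall (0 : EuclideanSpace ℝ (Fin m)) U)).exists_bound_of_continuousOn
      (hf_cont i).continuousOn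
    have hFb0 : 0 ≤ Fb := by
      have := hFb (x i 0, u i 0) ⟨mem_closedBall_zero_iff.mpr (hR i 0 le_rfl),
        mem_closedBall_zero_iff.mpr (hUb i 0 le_rfl)⟩
      exact le_trans (norm_nonneg _) this
    refine ⟨Fb, hFb0, fun s t hs ht => ?_⟩
    have := Convex.norm_image_sub_le_of_norm_hasDerivWithin_le
      (f := x i) (f' := fun z => f i (x i z, u i z)) (s := Set.Ici (0:ℝ))
      (fun z hz => (hode i z hz).hasDerivWithinAt)
      (fun z hz => hFb _ ⟨mem_closedBall_zero_iff.mpr (hR i z hz),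
        mem_closedBall_zero_iff.mpr (hUb i z hz)⟩)
      (convex_Ici 0) hs ht
    rwa [Real.norm_eq_abs] at this
  choose FL hFL0 hFLip using hxlip
  -- y Lipschitz
  have hylip : ∀ i, ∃ L, 0 ≤ L ∧ ∀ s t : ℝ, 0 ≤ s → 0 ≤ t →
      ‖y i t - y i s‖ ≤ L * |t - s| := by
    intro i
    have hfd : Continuous (fderiv ℝ (h i)) := (hh_smooth i).continuous_fderiv one_ne_zero
    obtain ⟨Mb, hMb⟩ := (isCompact_closedBall (0 : EuclideanSpace ℝ (Fin (n i))) (R i)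
      ).exists_bound_of_continuousOn hfd.continuousOn
    have hMb0 : 0 ≤ Mb := by
      have := hMb (x i 0) (mem_closedBall_zero_iff.mpr (hR i 0 le_rfl))
      exact le_trans (norm_nonneg _) this
    refine ⟨Mb * FL i, mul_nonneg hMb0 (hFL0 i), fun s t hs ht => ?_⟩
    have hlip : ‖h i (x i t) - h i (x i s)‖ ≤ Mb * ‖x i t - x i s‖ :=
      Convex.norm_image_sub_le_of_norm_fderiv_le
        (fun z _ => ((hh_smooth i).differentiable one_ne_zero).differentiableAt)
        (fun z hz => hMb z hz) (convex_closedBall _ _)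
        (mem_closedBall_zero_iff.mpr (hR i s hs))
        (mem_closedBall_zero_iff.mpr (hR i t ht))
    rw [hy i t, hy i s]
    calc ‖h i (x i t) - h i (x i s)‖ ≤ Mb * ‖x i t - x i s‖ := hlip
      _ ≤ Mb * (FL i * |t - s|) :=
          mul_le_mul_of_nonneg_left (hFLip i s t hs ht) hMb0
      _ = Mb * FL i * |t - s| := by ring
  choose L hL0 hLy using hylip
  -- W Lipschitz
  set K : ℝ := (∑ i, ∑ j, q i * A i j * (4 * Ym * (L j + L i))) + 1 with hK
  have hKpos : 0 < K := by
    have : 0 ≤ ∑ i, ∑ j, q i * A i j * (4 * Ym * (L j + L i)) := by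
      apply Finset.sum_nonneg; intro i _
      apply Finset.sum_nonneg; intro j _
      apply mul_nonneg (mul_nonneg (hqpos i).le (hA_nonneg i j))
      apply mul_nonneg (by linarith) (by linarith [hL0 i, hL0 j])
    rw [hK]; linarith
  have hWlip : ∀ s t : ℝ, 0 ≤ s → 0 ≤ t → |W t - W s| ≤ K * |t - s| := by
    intro s t hs ht
    have hterm : ∀ i j : Fin N,
        |q i * A i j * ‖y j t - y i t‖ ^ 2 - q i * A i j * ‖y j s - y i s‖ ^ 2|
          ≤ q i * A i j * (4 * Ym * (L j + L i)) * |t - s| := by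
      intro i j
      set a := y j t - y i t
      set b := y j s - y i s
      have hqa : 0 ≤ q i * A i j := mul_nonneg (hqpos i).le (hA_nonneg i j)
      have h1 : |q i * A i j * ‖a‖ ^ 2 - q i * A i j * ‖b‖ ^ 2|
          = q i * A i j * |‖a‖ ^ 2 - ‖b‖ ^ 2| := by
        rw [← mul_sub, abs_mul, abs_of_nonneg hqa]
      have h2 : |‖a‖ ^ 2 - ‖b‖ ^ 2| ≤ ‖a - b‖ * (‖a‖ + ‖b‖) := by
        have e1 : ‖a‖ ^ 2 - ‖b‖ ^ 2 = (‖a‖ - ‖b‖) * (‖a‖ + ‖b‖) := by ring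
        rw [e1, abs_mul, abs_of_nonneg (by positivity : (0:ℝ) ≤ ‖a‖ + ‖b‖)]
        exact mul_le_mul_of_nonneg_right (abs_norm_sub_norm_le a b) (by positivity)
      have h3 : ‖a - b‖ ≤ (L j + L i) * |t - s| := by
        have e2 : a - b = (y j t - y j s) - (y i t - y i s) := by
          simp only [a, b]; abel
        rw [e2]
        calc ‖(y j t - y j s) - (y i t - y i s)‖
            ≤ ‖y j t - y j s‖ + ‖y i t - y i s‖ := norm_sub_le _ _
          _ ≤ L j * |t - s| + L i * |t - s| := by
              gcongr
              · exact hLy j s t hs ht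
              · exact hLy i s t hs ht
          _ = (L j + L i) * |t - s| := by ring
      have h4 : ‖a‖ + ‖b‖ ≤ 4 * Ym := by
        have ha : ‖a‖ ≤ 2 * Ym := by
          calc ‖a‖ ≤ ‖y j t‖ + ‖y i t‖ := norm_sub_le _ _
            _ ≤ 2 * Ym := by linarith [hYmb j t ht, hYmb i t ht]
        have hb : ‖b‖ ≤ 2 * Ym := by
          calc ‖b‖ ≤ ‖y j s‖ + ‖y i s‖ := norm_sub_le _ _
            _ ≤ 2 * Ym := by linarith [hYmb j s hs, hYmb i s hs]
        linarith
      rw [h1]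
      calc q i * A i j * |‖a‖ ^ 2 - ‖b‖ ^ 2|
          ≤ q i * A i j * (‖a - b‖ * (‖a‖ + ‖b‖)) :=
            mul_le_mul_of_nonneg_left h2 hqa
        _ ≤ q i * A i j * (((L j + L i) * |t - s|) * (4 * Ym)) := by
            apply mul_le_mul_of_nonneg_left _ hqa
            apply mul_le_mul h3 h4 (by positivity) (mul_nonneg (by linarith [hL0 i, hL0 j]) (abs_nonneg _))
        _ = q i * A i j * (4 * Ym * (L j + L i)) * |t - s| := by ring
    have hsub : W t - W s
        = ∑ i, ∑ j, (q i * A i j * ‖y j t - y i t‖ ^ 2 - q i * A i j * ‖y j s - y i s‖ ^ 2) := by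
      rw [hW, ← Finset.sum_sub_distrib]
      apply Finset.sum_congr rfl
      intro i _
      rw [← Finset.sum_sub_distrib]
    rw [hsub]
    calc |∑ i, ∑ j, (q i * A i j * ‖y j t - y i t‖ ^ 2 - q i * A i j * ‖y j s - y i s‖ ^ 2)|
        ≤ ∑ i, |∑ j, (q i * A i j * ‖y j t - y i t‖ ^ 2 - q i * A i j * ‖y j s - y i s‖ ^ 2)| :=
          Finset.abs_sum_le_sum_abs _ _
      _ ≤ ∑ i, ∑ j, |q i * A i j * ‖y j t - y i t‖ ^ 2 - q i * A i j * ‖y j s - y i s‖ ^ 2| :=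
          Finset.sum_le_sum fun i _ => Finset.abs_sum_le_sum_abs _ _
      _ ≤ ∑ i, ∑ j, q i * A i j * (4 * Ym * (L j + L i)) * |t - s| :=
          Finset.sum_le_sum fun i _ => Finset.sum_le_sum fun j _ => hterm i j
      _ = (∑ i, ∑ j, q i * A i j * (4 * Ym * (L j + L i))) * |t - s| := by
          rw [Finset.sum_mul]
          apply Finset.sum_congr rfl
          intro i _
          rw [Finset.sum_mul]
      _ ≤ K * |t - s| := by
          apply mul_le_mul_of_nonneg_right _ (abs_nonneg _)
          rw [hK]; linarith
  -- apply Barbalat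
  have hWtend : Tendsto W atTop (nhds 0) :=
    barbalat W (C0 / ε) K hKpos hWcont hWnonneg hWlip hintW
  -- arcs synchronize
  have harc : ∀ a b : Fin N, 0 < A a b →
      Tendsto (fun t => ‖y b t - y a t‖) atTop (nhds 0) := by
    intro a b hab
    have hcoef : 0 < q a * A a b := mul_pos (hqpos a) hab
    have hsq : Tendsto (fun t => q a * A a b * ‖y b t - y a t‖ ^ 2) atTop (nhds 0) := by
      apply squeeze_zero (fun t => mul_nonneg hcoef.le (sq_nonneg _)) (fun t => ?_) hWtend
      calc q a * A a b * ‖y b t - y a t‖ ^ 2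
          ≤ ∑ j, q a * A a j * ‖y j t - y a t‖ ^ 2 :=
            Finset.single_le_sum (f := fun j => q a * A a j * ‖y j t - y a t‖ ^ 2)
              (fun j (_ : j ∈ Finset.univ) =>
                mul_nonneg (mul_nonneg (hqpos a).le (hA_nonneg a j)) (sq_nonneg _))
              (Finset.mem_univ b)
        _ ≤ W t := by
            rw [hW]
            exact Finset.single_le_sum
              (f := fun i => ∑ j, q i * A i j * ‖y j t - y i t‖ ^ 2)
              (fun i (_ : i ∈ Finset.univ) => Finset.sum_nonneg fun j _ =>
                mul_nonneg (mul_nonneg (hqpos i).le (hA_nonneg i j)) (sq_nonneg _))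
              (Finset.mem_univ a)
    have hsq2 : Tendsto (fun t => ‖y b t - y a t‖ ^ 2) atTop (nhds 0) := by
      have := hsq.const_mul (1 / (q a * A a b))
      simp only [mul_zero] at this
      convert this using 2 with t
      · rw [← mul_assoc, one_div, inv_mul_cancel₀ hcoef.ne', one_mul]
      
    have : Tendsto (fun t => Real.sqrt (‖y b t - y a t‖ ^ 2)) atTop (nhds (Real.sqrt 0)) :=
      (Real.continuous_sqrt.tendsto _).comp hsq2
    rw [Real.sqrt_zero] at this
    convert this using 2 with t
    rw [Real.sqrt_sq (norm_nonneg _)]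
  intro i j
  rcases eq_or_ne i j with rfl | hne
  · simpa using (tendsto_const_nhds : Tendsto (fun _ : ℝ => (0:ℝ)) atTop (nhds 0))
  have hall : ∀ b, Relation.TransGen (fun a b => 0 < A a b) i b →
      Tendsto (fun t => ‖y b t - y i t‖) atTop (nhds 0) := by
    intro b htg
    induction htg with
    | single hstep => exact harc _ _ hstep
    | tail htg hstep ih =>
      apply squeeze_zero (fun t => norm_nonneg _) (fun t => ?_)
        (by simpa using (harc _ _ hstep).add ih)
      exact norm_sub_le_norm_sub_add_norm_sub _ _ _
  exact hall j (hconn i j hne)
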